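/- Let n = 2 and define Q(z,χ,τ) := (τ + 2i·z₂χ₂)/(1 − 2i·z₁χ₁τ) (holomorphic near the origin of ℂ² × ℂ² × ℂ) and Q′(z,χ,τ) := τ + 2i·(z₁χ₁ + z₂χ₂). Then Q and Q′ are real normal defining functions of dimension 2; Q is holomorphically nondegenerate at 0, and Q′ is finitely nondegenerate at 0. The quadruple f(z,w) := (z₁w, z₂), g(z,w) := w, f̃(χ,τ) := (χ₁τ, χ₂), g̃(χ,τ) := τ is an HSPM sending (ℳ,0) into (ℳ′,0) which is Segre transversal to ℳ′ at 0 (∂g/∂w(0,0) = 1 ≠ 0), but for which det(∂f/∂z(z,0)) ≡ 0 and det(∂f̃/∂χ(χ,0)) ≡ 0 identically near 0. -/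

import Mathlib

open Filter Topology Complex

namespace HSPMpaper

variable {n : ℕ}

/-- Partial derivative of `F` in the `i`-th coordinate direction. -/
noncomputable def pd (i : Fin n) (F : (Fin n → ℂ) → ℂ) : (Fin n → ℂ) → ℂ :=
  fun z => fderiv ℂ F z (Pi.single i 1)

/-- Iterated partial derivative `∂^α` for a multi-index `α`. -/
noncomputable def mpd (α : Fin n → ℕ) (F : (Fin n → ℂ) → ℂ) : (Fin n → ℂ) → ℂ :=
  ((List.ofFn fun i : Fin n => (pd i)^[α i]).foldr (· ∘ ·) id) F

/-- Componentwise complex conjugation on `ℂⁿ`. -/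
def conjV (z : Fin n → ℂ) : Fin n → ℂ := fun i => starRingEnd ℂ (z i)

/-- The conjugate defining function `Q̄(χ,z,τ) = conj (Q (conj χ) (conj z) (conj τ))`. -/
def QBar (Q : (Fin n → ℂ) → (Fin n → ℂ) → ℂ → ℂ) : (Fin n → ℂ) → (Fin n → ℂ) → ℂ → ℂ :=
  fun χ z τ => starRingEnd ℂ (Q (conjV χ) (conjV z) (starRingEnd ℂ τ))

/-- `Q` is a normal defining function (of dimension `n`): holomorphic near the origin of
`ℂⁿ × ℂⁿ × ℂ` and satisfying `Q(0,χ,τ) = τ` and `Q(z,0,τ) = τ` near `0`. -/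
def IsNormalDF (Q : (Fin n → ℂ) → (Fin n → ℂ) → ℂ → ℂ) : Prop :=
  (∀ᶠ p in 𝓝 (0 : (Fin n → ℂ) × (Fin n → ℂ) × ℂ),
      AnalyticAt ℂ (fun q : (Fin n → ℂ) × (Fin n → ℂ) × ℂ => Q q.1 q.2.1 q.2.2) p) ∧
  (∀ᶠ p in 𝓝 (0 : (Fin n → ℂ) × (Fin n → ℂ) × ℂ),
      Q 0 p.2.1 p.2.2 = p.2.2 ∧ Q p.1 0 p.2.2 = p.2.2)

/-- `Q` is a real normal defining function: normal and `Q(z,χ,Q̄(χ,z,w)) = w` near `0`. -/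
def IsRealNormalDF (Q : (Fin n → ℂ) → (Fin n → ℂ) → ℂ → ℂ) : Prop :=
  IsNormalDF Q ∧
  ∀ᶠ p in 𝓝 (0 : (Fin n → ℂ) × (Fin n → ℂ) × ℂ),
    Q p.1 p.2.1 (QBar Q p.2.1 p.1 p.2.2) = p.2.2

/-- `(f,g,f̃,g̃)` is a holomorphic Segre preserving map sending `(ℳ,0)` into `(ℳ',0)`. -/
def IsHSPM (Q Q' : (Fin n → ℂ) → (Fin n → ℂ) → ℂ → ℂ)
    (f : (Fin n → ℂ) → ℂ → Fin n → ℂ) (g : (Fin n → ℂ) → ℂ → ℂ)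
    (ft : (Fin n → ℂ) → ℂ → Fin n → ℂ) (gt : (Fin n → ℂ) → ℂ → ℂ) : Prop :=
  (∀ᶠ p in 𝓝 (0 : (Fin n → ℂ) × ℂ), AnalyticAt ℂ (fun q : (Fin n → ℂ) × ℂ => f q.1 q.2) p) ∧
  (∀ᶠ p in 𝓝 (0 : (Fin n → ℂ) × ℂ), AnalyticAt ℂ (fun q : (Fin n → ℂ) × ℂ => g q.1 q.2) p) ∧
  (∀ᶠ p in 𝓝 (0 : (Fin n → ℂ) × ℂ), AnalyticAt ℂ (fun q : (Fin n → ℂ) × ℂ => ft q.1 q.2) p) ∧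
  (∀ᶠ p in 𝓝 (0 : (Fin n → ℂ) × ℂ), AnalyticAt ℂ (fun q : (Fin n → ℂ) × ℂ => gt q.1 q.2) p) ∧
  f 0 0 = 0 ∧ g 0 0 = 0 ∧ ft 0 0 = 0 ∧ gt 0 0 = 0 ∧
  ∀ᶠ p in 𝓝 (0 : (Fin n → ℂ) × (Fin n → ℂ) × ℂ),
    g p.1 (Q p.1 p.2.1 p.2.2) =
      Q' (f p.1 (Q p.1 p.2.1 p.2.2)) (ft p.2.1 p.2.2) (gt p.2.1 p.2.2)

/-- `M` is of finite type at `0`: `(z,χ) ↦ Q(z,χ,0)` does not vanish identically near `0`. -/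
def FiniteType (Q : (Fin n → ℂ) → (Fin n → ℂ) → ℂ → ℂ) : Prop :=
  ¬ ∀ᶠ p in 𝓝 (0 : (Fin n → ℂ) × (Fin n → ℂ)), Q p.1 p.2 0 = 0

/-- Jacobian matrix of `z ↦ f(z,0)` at `z`. -/
noncomputable def jacz (f : (Fin n → ℂ) → ℂ → Fin n → ℂ) (z : Fin n → ℂ) :
    Matrix (Fin n) (Fin n) ℂ :=
  Matrix.of fun i j => pd j (fun z' => f z' 0 i) z

/-- `ℋ` is Segre transversal to `ℳ'` at `0`: `∂g/∂w(0,0) ≠ 0`. -/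
noncomputable def SegreTransversal (g : (Fin n → ℂ) → ℂ → ℂ) : Prop :=
  deriv (fun w => g 0 w) 0 ≠ 0

/-- `ℋ` is totally Segre nondegenerate at `0`. -/
def TotallySegreNondeg (f ft : (Fin n → ℂ) → ℂ → Fin n → ℂ) : Prop :=
  (¬ ∀ᶠ z in 𝓝 (0 : Fin n → ℂ), (jacz f z).det = 0) ∧
  (¬ ∀ᶠ χ in 𝓝 (0 : Fin n → ℂ), (jacz ft χ).det = 0)

/-- `ℋ` is transversally null: `g ≡ 0` and `g̃ ≡ 0` near `0`. -/
def TransversallyNull (g gt : (Fin n → ℂ) → ℂ → ℂ) : Prop :=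
  (∀ᶠ p in 𝓝 (0 : (Fin n → ℂ) × ℂ), g p.1 p.2 = 0) ∧
  (∀ᶠ p in 𝓝 (0 : (Fin n → ℂ) × ℂ), gt p.1 p.2 = 0)

/-- The `k`-th coordinate direction in `ℂⁿ × ℂ`. -/
noncomputable def dirCT (n : ℕ) (k : Fin (n + 1)) : (Fin n → ℂ) × ℂ :=
  if h : (k : ℕ) < n then (Pi.single ⟨k, h⟩ 1, 0) else (0, 1)

/-- `M` is holomorphically nondegenerate at `0`: for some `K`, the map
`(χ,τ) ↦ (∂_z^α Q(0,χ,τ))_{|α| ≤ K}` has generic rank `n+1`. -/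
def HolNondeg (Q : (Fin n → ℂ) → (Fin n → ℂ) → ℂ → ℂ) : Prop :=
  ∃ K : ℕ, ∃ A : Fin (n + 1) → Fin n → ℕ, (∀ j, (∑ i, A j i) ≤ K) ∧
    ¬ ∀ᶠ p in 𝓝 (0 : (Fin n → ℂ) × ℂ),
      (Matrix.of fun j k : Fin (n + 1) =>
        fderiv ℂ (fun q : (Fin n → ℂ) × ℂ => mpd (A j) (fun z => Q z q.1 q.2) 0) p
          (dirCT n k)).det = 0

/-- `M` is of class `𝒞` at `0`: for some `K`, the map
`χ ↦ (∂_z^α Q(0,χ,0))_{|α| ≤ K}` has generic rank `n`. -/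
def ClassC (Q : (Fin n → ℂ) → (Fin n → ℂ) → ℂ → ℂ) : Prop :=
  ∃ K : ℕ, ∃ A : Fin n → Fin n → ℕ, (∀ j, (∑ i, A j i) ≤ K) ∧
    ¬ ∀ᶠ χ in 𝓝 (0 : Fin n → ℂ),
      (Matrix.of fun j k : Fin n =>
        pd k (fun χ' => mpd (A j) (fun z => Q z χ' 0) 0) χ).det = 0

/-- `M` is finitely nondegenerate at `0`: for some `K`, the vectors
`∂_χ ∂_z^α Q(0,0,0)`, `|α| ≤ K`, span `ℂⁿ`. -/
def FinNondeg (Q : (Fin n → ℂ) → (Fin n → ℂ) → ℂ → ℂ) : Prop :=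
  ∃ K : ℕ, Submodule.span ℂ
    {v : Fin n → ℂ | ∃ α : Fin n → ℕ, (∑ i, α i) ≤ K ∧
      v = fun i => pd i (fun χ => mpd α (fun z => Q z χ 0) 0) 0} = ⊤

/-- Full Jacobian matrix of `(z,w) ↦ (f(z,w), g(z,w))` at `p ∈ ℂⁿ × ℂ`. -/
noncomputable def jacFull (f : (Fin n → ℂ) → ℂ → Fin n → ℂ) (g : (Fin n → ℂ) → ℂ → ℂ)
    (p : (Fin n → ℂ) × ℂ) : Matrix (Fin (n + 1)) (Fin (n + 1)) ℂ :=
  Matrix.of fun i k =>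
    fderiv ℂ (fun q : (Fin n → ℂ) × ℂ => (Fin.snoc (f q.1 q.2) (g q.1 q.2) : Fin (n + 1) → ℂ) i) p (dirCT n k)

/-- The degree-`d` homogeneous term of the Taylor series of `φ` at `0`. -/
noncomputable def homogTerm (d : ℕ) (φ : (Fin n → ℂ) → ℂ) : (Fin n → ℂ) → ℂ :=
  fun z => iteratedFDeriv ℂ d φ 0 (fun _ => z) / (d.factorial : ℂ)

/-- The order of vanishing of `φ` at `0`. -/
noncomputable def vanishOrder (φ : (Fin n → ℂ) → ℂ) : ℕ :=
  sInf {d | homogTerm d φ ≠ 0}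



/-! ### Auxiliary lemmas for Example 3.6 -/

section Example36

lemma ex36_pd_eq {n : ℕ} {F : (Fin n → ℂ) → ℂ} {L : (Fin n → ℂ) →L[ℂ] ℂ} {x : Fin n → ℂ}
    (h : HasFDerivAt F L x) (i : Fin n) : pd i F x = L (Pi.single i 1) := by
  simp [pd, h.fderiv]

lemma ex36_mpd_two (α : Fin 2 → ℕ) (F : (Fin 2 → ℂ) → ℂ) :
    mpd α F = (pd 0)^[α 0] ((pd 1)^[α 1] F) := by
  simp [mpd, List.ofFn_succ]

lemma ex36_dirCT0 : dirCT 2 0 = (Pi.single 0 1, 0) := by simp [dirCT]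
lemma ex36_dirCT1 : dirCT 2 1 = (Pi.single 1 1, 0) := by simp [dirCT]
lemma ex36_dirCT2 : dirCT 2 2 = (0, 1) := by simp [dirCT]

lemma ex36_hproj {n : ℕ} (j : Fin n) (x : Fin n → ℂ) :
    HasFDerivAt (𝕜 := ℂ) (fun z : Fin n → ℂ => z j) (ContinuousLinearMap.proj j) x :=
  (ContinuousLinearMap.proj (R := ℂ) (φ := fun _ : Fin n => ℂ) j).hasFDerivAt

lemma ex36_hasFDerivAt_div {E : Type*} [NormedAddCommGroup E] [NormedSpace ℂ E]
    {c d : E → ℂ} {c' d' : E →L[ℂ] ℂ} {x : E}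
    (hc : HasFDerivAt c c' x) (hd : HasFDerivAt d d' x) (hx : d x ≠ 0) :
    HasFDerivAt (fun y => c y / d y) (((d x)^2)⁻¹ • (d x • c' - c x • d')) x := by
  have h1 : HasDerivAt Inv.inv (-((d x ^ 2)⁻¹)) (d x) := hasDerivAt_inv hx
  have hinv : HasFDerivAt (fun y => (d y)⁻¹)
      ((ContinuousLinearMap.smulRight (1 : ℂ →L[ℂ] ℂ) (-((d x ^ 2)⁻¹))).comp d') x :=
    h1.hasFDerivAt.comp x hd
  have h2 := hc.mul hinv
  have heq : (fun y => c y / d y) = fun y => c y * (d y)⁻¹ := by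
    funext y; rw [div_eq_mul_inv]
  rw [heq]
  refine h2.congr_fderiv ?_
  ext v
  simp [ContinuousLinearMap.smul_apply, smul_eq_mul]
  field_simp
  ring

lemma ex36_hQz (χ : Fin 2 → ℂ) (τ : ℂ) :
    HasFDerivAt (𝕜 := ℂ)
      (fun z : Fin 2 → ℂ => (τ + 2*I*(z 1 * χ 1)) / (1 - 2*I*(z 0 * χ 0) * τ))
      (((2*I*χ 1) • ContinuousLinearMap.proj 1) +
        (2*I*χ 0*τ^2) • ContinuousLinearMap.proj 0) 0 := by
  have hc : HasFDerivAt (𝕜 := ℂ) (fun z : Fin 2 → ℂ => τ + 2*I*(z 1 * χ 1))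
      ((2*I) • ((χ 1) • ContinuousLinearMap.proj 1)) 0 :=
    (((ex36_hproj 1 0).mul_const (χ 1)).const_mul (2*I)).const_add τ
  have hd : HasFDerivAt (𝕜 := ℂ) (fun z : Fin 2 → ℂ => 1 - 2*I*(z 0 * χ 0) * τ)
      (-(τ • ((2*I) • ((χ 0) • ContinuousLinearMap.proj 0)))) 0 :=
    ((((ex36_hproj 0 0).mul_const (χ 0)).const_mul (2*I)).mul_const τ).const_sub 1
  have hx : (1 : ℂ) - 2*I*((0 : Fin 2 → ℂ) 0 * χ 0) * τ ≠ 0 := by simp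
  have h := ex36_hasFDerivAt_div hc hd hx
  refine h.congr_fderiv ?_
  ext v
  simp [ContinuousLinearMap.smul_apply, smul_eq_mul]
  ring

lemma ex36_pdQ0 (χ : Fin 2 → ℂ) (τ : ℂ) :
    pd 0 (fun z : Fin 2 → ℂ => (τ + 2*I*(z 1 * χ 1)) / (1 - 2*I*(z 0 * χ 0) * τ)) 0
      = 2*I*χ 0*τ^2 := by
  rw [ex36_pd_eq (ex36_hQz χ τ)]
  simp [ContinuousLinearMap.smul_apply, Pi.single_apply]

lemma ex36_pdQ1 (χ : Fin 2 → ℂ) (τ : ℂ) :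
    pd 1 (fun z : Fin 2 → ℂ => (τ + 2*I*(z 1 * χ 1)) / (1 - 2*I*(z 0 * χ 0) * τ)) 0
      = 2*I*χ 1 := by
  rw [ex36_pd_eq (ex36_hQz χ τ)]
  simp [ContinuousLinearMap.smul_apply, Pi.single_apply]

lemma ex36_R0eq : (fun q : (Fin 2 → ℂ) × ℂ => mpd ![0,0]
    (fun z => (q.2 + 2*I*(z 1 * q.1 1)) / (1 - 2*I*(z 0 * q.1 0) * q.2)) 0)
    = fun q => q.2 := by
  funext q; rw [ex36_mpd_two]; simp

lemma ex36_R1eq : (fun q : (Fin 2 → ℂ) × ℂ => mpd ![1,0]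
    (fun z => (q.2 + 2*I*(z 1 * q.1 1)) / (1 - 2*I*(z 0 * q.1 0) * q.2)) 0)
    = fun q => 2*I*(q.1 0 * (q.2 * q.2)) := by
  funext q; rw [ex36_mpd_two]; simp only [Matrix.cons_val_zero, Matrix.cons_val_one,
    Matrix.head_cons, Function.iterate_one, Function.iterate_zero, id_eq]
  rw [ex36_pdQ0]; ring

lemma ex36_R2eq : (fun q : (Fin 2 → ℂ) × ℂ => mpd ![0,1]
    (fun z => (q.2 + 2*I*(z 1 * q.1 1)) / (1 - 2*I*(z 0 * q.1 0) * q.2)) 0)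
    = fun q => 2*I*(q.1 1) := by
  funext q; rw [ex36_mpd_two]; simp only [Matrix.cons_val_zero, Matrix.cons_val_one,
    Matrix.head_cons, Function.iterate_one, Function.iterate_zero, id_eq]
  rw [ex36_pdQ1]

lemma ex36_hfst0 (j : Fin 2) (p : (Fin 2 → ℂ) × ℂ) :
    HasFDerivAt (𝕜 := ℂ) (fun q : (Fin 2 → ℂ) × ℂ => q.1 j)
      ((ContinuousLinearMap.proj (R := ℂ) (φ := fun _ : Fin 2 => ℂ) j).comp
        (ContinuousLinearMap.fst ℂ (Fin 2 → ℂ) ℂ)) p :=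
  ((ContinuousLinearMap.proj (R := ℂ) (φ := fun _ : Fin 2 => ℂ) j).comp
        (ContinuousLinearMap.fst ℂ (Fin 2 → ℂ) ℂ)).hasFDerivAt

lemma ex36_hsnd (p : (Fin 2 → ℂ) × ℂ) :
    HasFDerivAt (𝕜 := ℂ) (fun q : (Fin 2 → ℂ) × ℂ => q.2)
      (ContinuousLinearMap.snd ℂ (Fin 2 → ℂ) ℂ) p :=
  (ContinuousLinearMap.snd ℂ (Fin 2 → ℂ) ℂ).hasFDerivAt

lemma ex36_detM (p : (Fin 2 → ℂ) × ℂ) :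
    (Matrix.of fun j k : Fin (2+1) =>
      fderiv ℂ (fun q : (Fin 2 → ℂ) × ℂ => mpd (![![0,0],![1,0],![0,1]] j)
        (fun z => (q.2 + 2*I*(z 1 * q.1 1)) / (1 - 2*I*(z 0 * q.1 0) * q.2)) 0) p
        (dirCT 2 k)).det = -4 * p.2^2 := by
  have hA0 : (![![0,0],![1,0],![0,1]] : Fin 3 → Fin 2 → ℕ) 0 = ![0,0] := rfl
  have hA1 : (![![0,0],![1,0],![0,1]] : Fin 3 → Fin 2 → ℕ) 1 = ![1,0] := rfl
  have hA2 : (![![0,0],![1,0],![0,1]] : Fin 3 → Fin 2 → ℕ) 2 = ![0,1] := rfl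
  rw [Matrix.det_fin_three]
  simp only [Matrix.of_apply, hA0, hA1, hA2, ex36_R0eq, ex36_R1eq, ex36_R2eq]
  have h0 : fderiv ℂ (fun q : (Fin 2 → ℂ) × ℂ => q.2) p
      = ContinuousLinearMap.snd ℂ (Fin 2 → ℂ) ℂ := (ex36_hsnd p).fderiv
  have h1 : fderiv ℂ (fun q : (Fin 2 → ℂ) × ℂ => 2*I*(q.1 0 * (q.2 * q.2))) p = _ := (((ex36_hfst0 0 p).mul ((ex36_hsnd p).mul (ex36_hsnd p))).const_mul (2*I)).fderiv
  have h2 := ((ex36_hfst0 1 p).const_mul (2*I)).fderiv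
  rw [h0, h1, h2, ex36_dirCT0, ex36_dirCT1, ex36_dirCT2]
  simp [ContinuousLinearMap.smul_apply, Pi.single_apply]
  linear_combination (4*p.2^2) * Complex.I_mul_I

/-- Holomorphic nondegeneracy of `Q`. -/
lemma ex36_holNondeg : HolNondeg (n := 2) (fun z χ τ =>
    (τ + 2 * Complex.I * (z 1 * χ 1)) / (1 - 2 * Complex.I * (z 0 * χ 0) * τ)) := by
  refine ⟨1, ![![0,0],![1,0],![0,1]], ?_, ?_⟩
  · intro j; fin_cases j <;> norm_num [Fin.sum_univ_two]
  · intro hev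
    have htend : Tendsto (fun t : ℂ => ((0 : Fin 2 → ℂ), t)) (𝓝 0)
        (𝓝 (0 : (Fin 2 → ℂ) × ℂ)) := by
      have hc : Continuous (fun t : ℂ => ((0 : Fin 2 → ℂ), t)) := by continuity
      exact hc.tendsto 0
    have h2 := htend.eventually hev
    have h3 := eventually_nhdsWithin_of_eventually_nhds (s := {(0:ℂ)}ᶜ) h2
    obtain ⟨t, ht, ht0⟩ := (h3.and self_mem_nhdsWithin).exists
    have hdet := ex36_detM ((0 : Fin 2 → ℂ), t)
    rw [show (Matrix.of fun j k : Fin (2+1) =>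
      fderiv ℂ (fun q : (Fin 2 → ℂ) × ℂ => mpd (![![0,0],![1,0],![0,1]] j)
        (fun z => (q.2 + 2*I*(z 1 * q.1 1)) / (1 - 2*I*(z 0 * q.1 0) * q.2)) 0)
        ((0 : Fin 2 → ℂ), t) (dirCT 2 k)).det = -4 * t^2 from hdet] at ht
    simp at ht
    exact ht0 ht

/-- The pd computations for `Q'` in the `z` variables. -/
lemma ex36_hQ'z (χ : Fin 2 → ℂ) (τ : ℂ) :
    HasFDerivAt (𝕜 := ℂ)
      (fun z : Fin 2 → ℂ => τ + 2*I*(z 0 * χ 0 + z 1 * χ 1))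
      ((2*I) • ((χ 0) • ContinuousLinearMap.proj 0 + (χ 1) • ContinuousLinearMap.proj 1)) 0 :=
  ((((ex36_hproj 0 0).mul_const (χ 0)).add ((ex36_hproj 1 0).mul_const (χ 1))).const_mul
    (2*I)).const_add τ

lemma ex36_pdQ'0 (χ : Fin 2 → ℂ) (τ : ℂ) :
    pd 0 (fun z : Fin 2 → ℂ => τ + 2*I*(z 0 * χ 0 + z 1 * χ 1)) 0 = 2*I*χ 0 := by
  rw [ex36_pd_eq (ex36_hQ'z χ τ)]
  simp [ContinuousLinearMap.smul_apply, Pi.single_apply]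

lemma ex36_pdQ'1 (χ : Fin 2 → ℂ) (τ : ℂ) :
    pd 1 (fun z : Fin 2 → ℂ => τ + 2*I*(z 0 * χ 0 + z 1 * χ 1)) 0 = 2*I*χ 1 := by
  rw [ex36_pd_eq (ex36_hQ'z χ τ)]
  simp [ContinuousLinearMap.smul_apply, Pi.single_apply]

lemma ex36_finNondeg : FinNondeg (n := 2) (fun z χ τ =>
    (τ + 2 * Complex.I * (z 0 * χ 0 + z 1 * χ 1) : ℂ)) := by
  refine ⟨1, ?_⟩
  have hv0 : (fun i : Fin 2 => pd i (fun χ : Fin 2 → ℂ => mpd ![1,0]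
      (fun z : Fin 2 → ℂ => (0:ℂ) + 2*I*(z 0 * χ 0 + z 1 * χ 1)) 0) 0) = ![2*I, 0] := by
    have hin : (fun χ : Fin 2 → ℂ => mpd ![1,0]
        (fun z : Fin 2 → ℂ => (0:ℂ) + 2*I*(z 0 * χ 0 + z 1 * χ 1)) 0)
        = fun χ => 2*I*(χ 0) := by
      funext χ
      rw [ex36_mpd_two]
      simp only [Matrix.cons_val_zero, Matrix.cons_val_one, Matrix.head_cons,
        Function.iterate_one, Function.iterate_zero, id_eq]
      exact ex36_pdQ'0 χ 0
    rw [hin]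
    funext i
    rw [ex36_pd_eq ((ex36_hproj 0 0).const_mul (2*I)) i]
    fin_cases i <;> simp [ContinuousLinearMap.smul_apply, Pi.single_apply]
  have hv1 : (fun i : Fin 2 => pd i (fun χ : Fin 2 → ℂ => mpd ![0,1]
      (fun z : Fin 2 → ℂ => (0:ℂ) + 2*I*(z 0 * χ 0 + z 1 * χ 1)) 0) 0) = ![0, 2*I] := by
    have hin : (fun χ : Fin 2 → ℂ => mpd ![0,1]
        (fun z : Fin 2 → ℂ => (0:ℂ) + 2*I*(z 0 * χ 0 + z 1 * χ 1)) 0)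
        = fun χ => 2*I*(χ 1) := by
      funext χ
      rw [ex36_mpd_two]
      simp only [Matrix.cons_val_zero, Matrix.cons_val_one, Matrix.head_cons,
        Function.iterate_one, Function.iterate_zero, id_eq]
      exact ex36_pdQ'1 χ 0
    rw [hin]
    funext i
    rw [ex36_pd_eq ((ex36_hproj 1 0).const_mul (2*I)) i]
    fin_cases i <;> simp [ContinuousLinearMap.smul_apply, Pi.single_apply]
  have m0 : (![2*I, 0] : Fin 2 → ℂ) ∈ Submodule.span ℂ
      {v : Fin 2 → ℂ | ∃ α : Fin 2 → ℕ, (∑ i, α i) ≤ 1 ∧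
        v = fun i => pd i (fun χ => mpd α
          (fun z : Fin 2 → ℂ => (0:ℂ) + 2*I*(z 0 * χ 0 + z 1 * χ 1)) 0) 0} :=
    Submodule.subset_span ⟨![1,0], by norm_num [Fin.sum_univ_two], hv0.symm⟩
  have m1 : (![0, 2*I] : Fin 2 → ℂ) ∈ Submodule.span ℂ
      {v : Fin 2 → ℂ | ∃ α : Fin 2 → ℕ, (∑ i, α i) ≤ 1 ∧
        v = fun i => pd i (fun χ => mpd α
          (fun z : Fin 2 → ℂ => (0:ℂ) + 2*I*(z 0 * χ 0 + z 1 * χ 1)) 0) 0} :=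
    Submodule.subset_span ⟨![0,1], by norm_num [Fin.sum_univ_two], hv1.symm⟩
  rw [Submodule.eq_top_iff']
  intro x
  have hx : x = (x 0 / (2*I)) • (![2*I, 0] : Fin 2 → ℂ)
      + (x 1 / (2*I)) • (![0, 2*I] : Fin 2 → ℂ) := by
    funext i
    fin_cases i <;> simp
  rw [hx]
  exact Submodule.add_mem _ (Submodule.smul_mem _ _ m0) (Submodule.smul_mem _ _ m1)

end Example36


/-! ### Real normal defining function properties, HSPM, and Jacobians -/

section Example36b

/-- Analytic coordinate functions on `ℂ² × ℂ² × ℂ`. -/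
lemma ex36_anA (j : Fin 2) (p : (Fin 2 → ℂ) × (Fin 2 → ℂ) × ℂ) :
    AnalyticAt ℂ (fun q : (Fin 2 → ℂ) × (Fin 2 → ℂ) × ℂ => q.1 j) p :=
  ((ContinuousLinearMap.proj (R := ℂ) (φ := fun _ : Fin 2 => ℂ) j).comp
    (ContinuousLinearMap.fst ℂ (Fin 2 → ℂ) ((Fin 2 → ℂ) × ℂ))).analyticAt p

lemma ex36_anB (j : Fin 2) (p : (Fin 2 → ℂ) × (Fin 2 → ℂ) × ℂ) :
    AnalyticAt ℂ (fun q : (Fin 2 → ℂ) × (Fin 2 → ℂ) × ℂ => q.2.1 j) p :=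
  ((ContinuousLinearMap.proj (R := ℂ) (φ := fun _ : Fin 2 => ℂ) j).comp
    ((ContinuousLinearMap.fst ℂ (Fin 2 → ℂ) ℂ).comp
      (ContinuousLinearMap.snd ℂ (Fin 2 → ℂ) ((Fin 2 → ℂ) × ℂ)))).analyticAt p

lemma ex36_anC (p : (Fin 2 → ℂ) × (Fin 2 → ℂ) × ℂ) :
    AnalyticAt ℂ (fun q : (Fin 2 → ℂ) × (Fin 2 → ℂ) × ℂ => q.2.2) p :=
  ((ContinuousLinearMap.snd ℂ (Fin 2 → ℂ) ℂ).comp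
    (ContinuousLinearMap.snd ℂ (Fin 2 → ℂ) ((Fin 2 → ℂ) × ℂ))).analyticAt p

lemma ex36_hDen : ∀ᶠ p in 𝓝 (0 : (Fin 2 → ℂ) × (Fin 2 → ℂ) × ℂ),
    (1 : ℂ) - 2*I*(p.1 0 * p.2.1 0) * p.2.2 ≠ 0 := by
  have c1 : ContinuousAt (fun p : (Fin 2 → ℂ) × (Fin 2 → ℂ) × ℂ =>
      (1 : ℂ) - 2*I*(p.1 0 * p.2.1 0) * p.2.2) 0 := by fun_prop
  exact c1.eventually_ne (by simp)

lemma ex36_QBarQ (χ z : Fin 2 → ℂ) (w : ℂ) :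
    QBar (n := 2) (fun z χ τ =>
      (τ + 2 * Complex.I * (z 1 * χ 1)) / (1 - 2 * Complex.I * (z 0 * χ 0) * τ)) χ z w
    = (w - 2*I*(χ 1 * z 1)) / (1 + 2*I*(χ 0 * z 0) * w) := by
  simp only [QBar, conjV, map_div₀, map_add, map_sub, map_mul, map_one, map_ofNat,
    Complex.conj_conj, Complex.conj_I]
  ring_nf

lemma ex36_realQ : IsRealNormalDF (n := 2) (fun z χ τ =>
    (τ + 2 * Complex.I * (z 1 * χ 1)) / (1 - 2 * Complex.I * (z 0 * χ 0) * τ)) := by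
  refine ⟨⟨?_, ?_⟩, ?_⟩
  · filter_upwards [ex36_hDen] with p hp
    exact AnalyticAt.div
      ((ex36_anC p).add (analyticAt_const.mul ((ex36_anA 1 p).mul (ex36_anB 1 p))))
      (analyticAt_const.sub ((analyticAt_const.mul
        ((ex36_anA 0 p).mul (ex36_anB 0 p))).mul (ex36_anC p))) hp
  · refine Eventually.of_forall fun p => ⟨by simp, by simp⟩
  · have c1 : ContinuousAt (fun p : (Fin 2 → ℂ) × (Fin 2 → ℂ) × ℂ =>
        (1 : ℂ) + 2*I*(p.2.1 0 * p.1 0) * p.2.2) 0 := by fun_prop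
    have c2 : ContinuousAt (fun p : (Fin 2 → ℂ) × (Fin 2 → ℂ) × ℂ =>
        (p.2.2 - 2*I*(p.2.1 1 * p.1 1)) / (1 + 2*I*(p.2.1 0 * p.1 0) * p.2.2)) 0 :=
      ContinuousAt.div (by fun_prop) c1 (by simp)
    have c3 : ContinuousAt (fun p : (Fin 2 → ℂ) × (Fin 2 → ℂ) × ℂ =>
        (1 : ℂ) - 2*I*(p.1 0 * p.2.1 0) *
          ((p.2.2 - 2*I*(p.2.1 1 * p.1 1)) / (1 + 2*I*(p.2.1 0 * p.1 0) * p.2.2))) 0 :=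
      continuousAt_const.sub ((by fun_prop : ContinuousAt
        (fun p : (Fin 2 → ℂ) × (Fin 2 → ℂ) × ℂ => 2*I*(p.1 0 * p.2.1 0)) 0).mul c2)
    have hE1 := c1.eventually_ne (y := 0) (by simp)
    have hE2 := c3.eventually_ne (y := 0) (by simp)
    filter_upwards [hE1, hE2] with p h1 h2
    have key := ex36_QBarQ p.2.1 p.1 p.2.2
    simp only [key]
    rw [div_eq_iff h2]
    field_simp [h1]
    have h1' : (1 + p.2.2 * 2 * I * p.2.1 0 * p.1 0) ≠ 0 := by convert h1 using 1; ring
    field_simp [h1']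
    ring

lemma ex36_QBarQ' (χ z : Fin 2 → ℂ) (w : ℂ) :
    QBar (n := 2) (fun z χ τ =>
      (τ + 2 * Complex.I * (z 0 * χ 0 + z 1 * χ 1) : ℂ)) χ z w
    = w - 2*I*(χ 0 * z 0 + χ 1 * z 1) := by
  simp only [QBar, conjV, map_add, map_sub, map_mul, map_ofNat,
    Complex.conj_conj, Complex.conj_I]
  ring

lemma ex36_realQ' : IsRealNormalDF (n := 2) (fun z χ τ =>
    (τ + 2 * Complex.I * (z 0 * χ 0 + z 1 * χ 1) : ℂ)) := by
  refine ⟨⟨?_, ?_⟩, ?_⟩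
  · refine Eventually.of_forall fun p => ?_
    exact (ex36_anC p).add (analyticAt_const.mul
      (((ex36_anA 0 p).mul (ex36_anB 0 p)).add ((ex36_anA 1 p).mul (ex36_anB 1 p))))
  · refine Eventually.of_forall fun p => ⟨by simp, by simp⟩
  · refine Eventually.of_forall fun p => ?_
    have key := ex36_QBarQ' p.2.1 p.1 p.2.2
    simp only [key]
    ring

/-- Analytic coordinate functions on `ℂ² × ℂ`. -/
lemma ex36_anF (j : Fin 2) (p : (Fin 2 → ℂ) × ℂ) :
    AnalyticAt ℂ (fun q : (Fin 2 → ℂ) × ℂ => q.1 j) p :=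
  ((ContinuousLinearMap.proj (R := ℂ) (φ := fun _ : Fin 2 => ℂ) j).comp
    (ContinuousLinearMap.fst ℂ (Fin 2 → ℂ) ℂ)).analyticAt p

lemma ex36_anS (p : (Fin 2 → ℂ) × ℂ) :
    AnalyticAt ℂ (fun q : (Fin 2 → ℂ) × ℂ => q.2) p :=
  (ContinuousLinearMap.snd ℂ (Fin 2 → ℂ) ℂ).analyticAt p

lemma ex36_anVec (p : (Fin 2 → ℂ) × ℂ) :
    AnalyticAt ℂ (fun q : (Fin 2 → ℂ) × ℂ => (![q.1 0 * q.2, q.1 1] : Fin 2 → ℂ)) p := by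
  have h : ∀ i : Fin 2, AnalyticAt ℂ
      (fun q : (Fin 2 → ℂ) × ℂ => (![q.1 0 * q.2, q.1 1] : Fin 2 → ℂ) i) p := by
    intro i
    fin_cases i
    · exact (ex36_anF 0 p).mul (ex36_anS p)
    · exact ex36_anF 1 p
  exact analyticAt_pi_iff.2 h

lemma ex36_isHSPM : IsHSPM (n := 2)
    (fun z χ τ => (τ + 2 * Complex.I * (z 1 * χ 1)) / (1 - 2 * Complex.I * (z 0 * χ 0) * τ))
    (fun z χ τ => (τ + 2 * Complex.I * (z 0 * χ 0 + z 1 * χ 1) : ℂ))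
    (fun z w => ![z 0 * w, z 1]) (fun _ w => w)
    (fun χ τ => ![χ 0 * τ, χ 1]) (fun _ τ => τ) := by
  refine ⟨Eventually.of_forall fun p => ex36_anVec p,
    Eventually.of_forall fun p => ex36_anS p,
    Eventually.of_forall fun p => ex36_anVec p,
    Eventually.of_forall fun p => ex36_anS p,
    ?_, rfl, ?_, rfl, ?_⟩
  · funext i; fin_cases i <;> simp
  · funext i; fin_cases i <;> simp
  · filter_upwards [ex36_hDen] with p hp
    simp only [Matrix.cons_val_zero, Matrix.cons_val_one, Matrix.head_cons]
    field_simp [hp]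
    have hp' : (1 - p.2.2 * 2 * I * p.1 0 * p.2.1 0) ≠ 0 := by convert hp using 1; ring
    field_simp [hp']
    ring

lemma ex36_row0 (x : Fin 2 → ℂ) (j : Fin 2) :
    pd j (fun z' : Fin 2 → ℂ => (![z' 0 * (0:ℂ), z' 1] : Fin 2 → ℂ) 0) x = 0 := by
  have hz : (fun z' : Fin 2 → ℂ => (![z' 0 * (0:ℂ), z' 1] : Fin 2 → ℂ) 0)
      = fun _ => (0:ℂ) := by
    funext z'; simp
  rw [hz]
  simp [pd]

lemma ex36_jacf (z : Fin 2 → ℂ) :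
    (jacz (fun z w => (![z 0 * w, z 1] : Fin 2 → ℂ)) z).det = 0 := by
  rw [Matrix.det_fin_two]
  have h00 : jacz (fun z w => (![z 0 * w, z 1] : Fin 2 → ℂ)) z 0 0 = 0 := ex36_row0 z 0
  have h01 : jacz (fun z w => (![z 0 * w, z 1] : Fin 2 → ℂ)) z 0 1 = 0 := ex36_row0 z 1
  rw [h00, h01]
  ring

end Example36b


lemma ex36_deriv : deriv (fun w : ℂ => w) 0 = 1 := by simp

lemma ex36_trans : SegreTransversal (n := 2) (fun _ w => w) := by
  show deriv (fun w : ℂ => w) 0 ≠ 0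
  simp

/-- Example 3.6: an explicit HSPM between the complexifications of
`Im w = |z₁w|² + |z₂|²` (holomorphically nondegenerate) and `Im w' = |z₁'|² + |z₂'|²`
(finitely nondegenerate) which is Segre transversal at `0` but neither totally nor partially
Segre nondegenerate at `0`. -/
theorem statement15 :
    let Q : (Fin 2 → ℂ) → (Fin 2 → ℂ) → ℂ → ℂ :=
      fun z χ τ => (τ + 2 * Complex.I * (z 1 * χ 1)) / (1 - 2 * Complex.I * (z 0 * χ 0) * τ)
    let Q' : (Fin 2 → ℂ) → (Fin 2 → ℂ) → ℂ → ℂ :=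
      fun z χ τ => τ + 2 * Complex.I * (z 0 * χ 0 + z 1 * χ 1)
    let f : (Fin 2 → ℂ) → ℂ → Fin 2 → ℂ := fun z w => ![z 0 * w, z 1]
    let g : (Fin 2 → ℂ) → ℂ → ℂ := fun _ w => w
    let ft : (Fin 2 → ℂ) → ℂ → Fin 2 → ℂ := fun χ τ => ![χ 0 * τ, χ 1]
    let gt : (Fin 2 → ℂ) → ℂ → ℂ := fun _ τ => τ
    IsRealNormalDF Q ∧ IsRealNormalDF Q' ∧
    HolNondeg Q ∧ FinNondeg Q' ∧
    IsHSPM Q Q' f g ft gt ∧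
    deriv (fun w => g 0 w) 0 = 1 ∧
    SegreTransversal g ∧
    (∀ z : Fin 2 → ℂ, (jacz f z).det = 0) ∧
    (∀ χ : Fin 2 → ℂ, (jacz ft χ).det = 0) := by
  exact ⟨ex36_realQ, ex36_realQ', ex36_holNondeg, ex36_finNondeg, ex36_isHSPM,
    ex36_deriv, ex36_trans, ex36_jacf, ex36_jacf⟩

end HSPMpaper
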